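/- arXiv:2510.16869 — 3 statements merged into one kernel-verified Lean document; each statement's English description precedes it below -/
import Mathlib

section
/- For any x, y > 0, the Bregman divergence of the generalized negative entropy h(u) = u·log u − u satisfies V_h(y,x) := y·log(y/x) − y + x ≥ (y−x)²/(2·max(x,y)). -/
/-- For `0 < t ≤ 1`: `t log t - t + 1 ≥ (t-1)²/2`. -/
lemma breg_aux1 (t : ℝ) (ht0 : 0 < t) (ht1 : t ≤ 1) :
    (t - 1) ^ 2 / 2 ≤ t * Real.log t - t + 1 := by
  set g : ℝ → ℝ := fun u => u * Real.log u - u + 1 - (u - 1) ^ 2 / 2 with hg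
  have hderiv : ∀ u : ℝ, 0 < u → HasDerivAt g (Real.log u - (u - 1)) u := by
    intro u hu0
    have h1 := ((Real.hasDerivAt_mul_log (ne_of_gt hu0)).sub (hasDerivAt_id u)).add_const 1
    have h2 := (((hasDerivAt_id u).sub_const 1).pow 2).div_const 2
    refine (h1.sub h2).congr_deriv ?_
    simp only [id_eq]
    push_cast
    ring
  have key : AntitoneOn g (Set.Icc t 1) := by
    apply antitoneOn_of_deriv_nonpos (convex_Icc t 1)
    · apply ContinuousOn.sub
      apply ContinuousOn.add
      apply ContinuousOn.sub
      · exact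
          continuousOn_id.mul (Real.continuousOn_log.mono (fun u hu =>
            ne_of_gt (lt_of_lt_of_le ht0 hu.1)))
      · exact continuousOn_id
      · exact continuousOn_const
      · exact ((continuousOn_id.sub continuousOn_const).pow 2).div_const 2
    · intro u hu
      rw [interior_Icc] at hu
      exact (hderiv u (lt_trans ht0 hu.1)).differentiableAt.differentiableWithinAt
    · intro u hu
      rw [interior_Icc] at hu
      have hu0 : 0 < u := lt_trans ht0 hu.1
      rw [(hderiv u hu0).deriv]
      have := Real.log_le_sub_one_of_pos hu0
      linarith
  have h1 : g 1 ≤ g t := key (Set.mem_Icc.mpr ⟨le_refl t, ht1⟩)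
    (Set.mem_Icc.mpr ⟨ht1, le_refl 1⟩) ht1
  simp only [hg, Real.log_one] at h1
  nlinarith [h1]

/-- For `0 < s ≤ 1`: `-log s ≥ (1-s)(3-s)/2`. -/
lemma breg_aux2 (s : ℝ) (hs0 : 0 < s) (hs1 : s ≤ 1) :
    (1 - s) * (3 - s) / 2 ≤ -Real.log s := by
  set g : ℝ → ℝ := fun u => -Real.log u - (1 - u) * (3 - u) / 2 with hg
  have hderiv : ∀ u : ℝ, 0 < u → HasDerivAt g (2 - u - 1 / u) u := by
    intro u hu0
    have h1 := (Real.hasDerivAt_log (ne_of_gt hu0)).neg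
    have h2 := (((hasDerivAt_const u (1:ℝ)).sub (hasDerivAt_id u)).mul
      ((hasDerivAt_const u (3:ℝ)).sub (hasDerivAt_id u))).div_const 2
    refine (h1.sub h2).congr_deriv ?_
    simp only [Pi.sub_apply, id_eq]
    field_simp
    ring
  have key : AntitoneOn g (Set.Icc s 1) := by
    apply antitoneOn_of_deriv_nonpos (convex_Icc s 1)
    · apply ContinuousOn.sub
      · exact (Real.continuousOn_log.mono (fun u hu =>
          ne_of_gt (lt_of_lt_of_le hs0 hu.1))).neg
      · exact (((continuousOn_const.sub continuousOn_id).mul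
          (continuousOn_const.sub continuousOn_id))).div_const 2
    · intro u hu
      rw [interior_Icc] at hu
      exact (hderiv u (lt_trans hs0 hu.1)).differentiableAt.differentiableWithinAt
    · intro u hu
      rw [interior_Icc] at hu
      have hu0 : 0 < u := lt_trans hs0 hu.1
      rw [(hderiv u hu0).deriv]
      have h0 : (0:ℝ) ≤ (u - 1) ^ 2 / u := by positivity
      have he : (u - 1) ^ 2 / u = u - 2 + 1 / u := by
        field_simp
        ring
      linarith [he ▸ h0]
  have h1 : g 1 ≤ g s := key (Set.mem_Icc.mpr ⟨le_refl s, hs1⟩)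
    (Set.mem_Icc.mpr ⟨hs1, le_refl 1⟩) hs1
  simp only [hg, Real.log_one] at h1
  nlinarith [h1]

theorem bregman_entropy_lower_bound
    (x y : ℝ) (hx : 0 < x) (hy : 0 < y) :
    y * Real.log (y / x) - y + x ≥ (y - x) ^ 2 / (2 * max x y) := by
  rcases le_total y x with h | h
  · -- y ≤ x, max = x
    rw [max_eq_left h, ge_iff_le]
    have ht0 : 0 < y / x := by positivity
    have ht1 : y / x ≤ 1 := (div_le_one hx).mpr h
    have key := breg_aux1 (y / x) ht0 ht1
    have key2 := mul_le_mul_of_nonneg_left key hx.le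
    have e1 : x * ((y / x - 1) ^ 2 / 2) = (y - x) ^ 2 / (2 * x) := by
      field_simp
    have e2 : x * (y / x * Real.log (y / x) - y / x + 1)
        = y * Real.log (y / x) - y + x := by
      field_simp
    rw [e1, e2] at key2
    exact key2
  · -- x ≤ y, max = y
    rw [max_eq_right h, ge_iff_le]
    have hs0 : 0 < x / y := by positivity
    have hs1 : x / y ≤ 1 := (div_le_one hy).mpr h
    have key := breg_aux2 (x / y) hs0 hs1
    have hlog : Real.log (y / x) = -Real.log (x / y) := by
      rw [Real.log_div (ne_of_gt hy) (ne_of_gt hx), Real.log_div (ne_of_gt hx) (ne_of_gt hy)]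
      ring
    rw [hlog]
    have key2 := mul_le_mul_of_nonneg_left key (by positivity : (0:ℝ) ≤ y ^ 2)
    have e1 : y ^ 2 * ((1 - x / y) * (3 - x / y) / 2) = (y - x) * (3 * y - x) / 2 := by
      field_simp
    rw [e1] at key2
    -- key2 : (y-x)*(3y-x)/2 ≤ y^2 * (-log(x/y))
    rw [div_le_iff₀ (by positivity : (0:ℝ) < 2 * y)]
    nlinarith [key2]
end

section
/- Let g₁,…,g_T satisfy max(−1, −1/λ_t) ≤ g_t ≤ 1 where λ₁ = 1, λ_{t+1} = λ_t·exp(−α·g_t), and α = 1/√T with T ≥ 1. Then Σ_{t=1}^T λ_t·g_t ≤ 4√T + 2√T = O(√T). -/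
set_option maxHeartbeats 1000000


open Finset

private lemma exp_neg_le_aux (y : ℝ) (hy : 0 ≤ y) :
    Real.exp (-y) ≤ 1 - y + y ^ 2 / 2 := by
  have hq : 1 + y + y ^ 2 / 2 ≤ Real.exp y := Real.quadratic_le_exp_of_nonneg hy
  have h1 : Real.exp (-y) * Real.exp y = 1 := by
    rw [← Real.exp_add]; simp
  have hE : 0 < Real.exp (-y) := Real.exp_pos _
  nlinarith [mul_le_mul_of_nonneg_left hq hE.le, sq_nonneg y, sq_nonneg (y ^ 2),
    mul_nonneg (mul_nonneg hy hy) hy]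

private lemma exp_le_aux (z : ℝ) (h0 : 0 ≤ z) (h1 : z ≤ 1) :
    Real.exp z ≤ 1 + z + z ^ 2 := by
  have h := Real.exp_bound' h0 h1 (n := 2) (by norm_num)
  have hsum : (∑ m ∈ Finset.range 2, z ^ m / m.factorial) = 1 + z := by
    simp [Finset.sum_range_succ]
  rw [hsum] at h
  norm_num [Nat.factorial] at h
  nlinarith [sq_nonneg z]

theorem weighted_lagrangian_sum_bound
    (T : ℕ) (hT : 1 ≤ T)
    (g lam : ℕ → ℝ)
    (hlam1 : lam 1 = 1)
    (hlam_rec : ∀ t, lam (t + 1) = lam t * Real.exp (-(1 / Real.sqrt T) * g t))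
    (hg_lb : ∀ t ∈ Finset.Icc 1 T, max (-1) (-(1 / lam t)) ≤ g t)
    (hg_ub : ∀ t ∈ Finset.Icc 1 T, g t ≤ 1) :
    ∑ t ∈ Finset.Icc 1 T, lam t * g t
      ≤ 4 * Real.sqrt T + 2 * Real.sqrt T := by
  set s : ℝ := Real.sqrt T with hs_def
  have hT1 : (1 : ℝ) ≤ (T : ℝ) := by exact_mod_cast hT
  have hs1 : 1 ≤ s := by
    rw [hs_def, show (1:ℝ) = Real.sqrt 1 by simp]
    exact Real.sqrt_le_sqrt hT1
  have hs0 : 0 < s := lt_of_lt_of_le one_pos hs1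
  have hss : s * s = (T : ℝ) := Real.mul_self_sqrt (by positivity)
  set α : ℝ := 1 / s with hα_def
  have hα0 : 0 < α := by positivity
  have hα1 : α ≤ 1 := by
    rw [hα_def]; rw [div_le_one hs0]; exact hs1
  have hαs : α * s = 1 := by rw [hα_def]; field_simp
  have hαT : α * (T : ℝ) = s := by
    rw [← hss, hα_def]; field_simp
  have hα2T : α ^ 2 * (T : ℝ) = 1 := by
    rw [← hss, hα_def]; field_simp
  -- positivity of lam
  have hpos : ∀ t, 1 ≤ t → 0 < lam t := by
    intro t ht
    induction t, ht using Nat.le_induction with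
    | base => rw [hlam1]; exact one_pos
    | succ n hn ih =>
      rw [hlam_rec n]
      exact mul_pos ih (Real.exp_pos _)
  -- per-step inequalities
  have hstep : ∀ t ∈ Finset.Icc 1 T,
      (lam t * g t * α ≤ (lam t - lam (t+1)) + α ^ 2 + (α / 2) * max (lam t * g t * α) 0)
      ∧ (max (lam t * g t * α) 0 ≤ 2 * (lam t - lam (t+1)) + 4 * α) := by
    intro t htm
    obtain ⟨ht1, htT⟩ := Finset.mem_Icc.mp htm
    have hL : 0 < lam t := hpos t ht1
    have hG1 : g t ≤ 1 := hg_ub t htm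
    have hlb := hg_lb t htm
    have hGm1 : -1 ≤ g t := le_trans (le_max_left _ _) hlb
    have hLG : -1 ≤ lam t * g t := by
      have h2 : -(1 / lam t) ≤ g t := le_trans (le_max_right _ _) hlb
      have := mul_le_mul_of_nonneg_left h2 hL.le
      calc (-1 : ℝ) = lam t * (-(1 / lam t)) := by field_simp
        _ ≤ lam t * g t := this
    have hrec : lam (t+1) = lam t * Real.exp (-(α * g t)) := by
      rw [hlam_rec t, hα_def]; ring_nf
    rcases le_or_gt 0 (g t) with hg0 | hg0
    · -- nonnegative case
      have hy0 : 0 ≤ α * g t := mul_nonneg hα0.le hg0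
      have hyα : α * g t ≤ α := by
        nlinarith
      have hexp : Real.exp (-(α * g t)) ≤ 1 - α * g t + (α * g t) ^ 2 / 2 :=
        exp_neg_le_aux _ hy0
      have hexp' : lam t * Real.exp (-(α * g t))
          ≤ lam t * (1 - α * g t + (α * g t) ^ 2 / 2) :=
        mul_le_mul_of_nonneg_left hexp hL.le
      have hsq : lam t * (α * g t) * (α * g t) ≤ lam t * (α * g t) * α :=
        mul_le_mul_of_nonneg_left hyα (mul_nonneg hL.le hy0)
      have hdrop : lam t * (α * g t) * (1 - α / 2) ≤ lam t - lam (t+1) := by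
        rw [hrec]
        nlinarith [hexp', hsq]
      have hLy0 : 0 ≤ lam t * g t * α := by positivity
      have hmax : max (lam t * g t * α) 0 = lam t * g t * α := max_eq_left hLy0
      constructor
      · rw [hmax]
        nlinarith [sq_nonneg α]
      · rw [hmax]
        nlinarith
    · -- negative case
      have hz0 : 0 ≤ -(α * g t) := by nlinarith
      have hz1 : -(α * g t) ≤ α := by nlinarith
      have hLz : lam t * (-(α * g t)) ≤ α := by
        have : -(lam t * g t) ≤ 1 := by linarith
        nlinarith
      have hexp : Real.exp (-(α * g t)) ≤ 1 + (-(α * g t)) + (-(α * g t)) ^ 2 :=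
        exp_le_aux _ hz0 (le_trans hz1 hα1)
      have hexp' : lam t * Real.exp (-(α * g t))
          ≤ lam t * (1 + (-(α * g t)) + (-(α * g t)) ^ 2) :=
        mul_le_mul_of_nonneg_left hexp hL.le
      have hsq2 : lam t * (-(α * g t)) * (-(α * g t)) ≤ α * α :=
        mul_le_mul hLz hz1 hz0 hα0.le
      have hgrow : lam (t+1) - lam t ≤ 2 * α := by
        rw [hrec]
        nlinarith [hexp', hsq2, hLz, hα1]
      have hLy0 : lam t * g t * α ≤ 0 := by nlinarith
      have hmax : max (lam t * g t * α) 0 = 0 := max_eq_right hLy0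
      constructor
      · rw [hmax]
        rw [hrec]
        nlinarith [hexp', hsq2]
      · rw [hmax]; linarith
    -- end cases
  -- telescoping sum
  have htel : ∑ t ∈ Finset.Icc 1 T, (lam t - lam (t+1)) = lam 1 - lam (T+1) := by
    rw [← Finset.Ico_add_one_right_eq_Icc, Finset.sum_Ico_eq_sum_range]
    simp only [Nat.succ_sub_one, Nat.add_sub_cancel]
    have := Finset.sum_range_sub' (fun i => lam (1 + i)) T
    simpa [Nat.add_assoc, Nat.add_comm] using this
  have hlamT1 : 0 < lam (T+1) := hpos (T+1) (by omega)
  -- sum of B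
  have hM : ∑ t ∈ Finset.Icc 1 T, max (lam t * g t * α) 0
      ≤ 2 + 4 * s := by
    have h1 : ∑ t ∈ Finset.Icc 1 T, max (lam t * g t * α) 0
        ≤ ∑ t ∈ Finset.Icc 1 T, (2 * (lam t - lam (t+1)) + 4 * α) :=
      Finset.sum_le_sum (fun t ht => (hstep t ht).2)
    have h2 : ∑ t ∈ Finset.Icc 1 T, (2 * (lam t - lam (t+1)) + 4 * α)
        = 2 * (lam 1 - lam (T+1)) + 4 * α * T := by
      rw [Finset.sum_add_distrib, ← Finset.mul_sum, htel, Finset.sum_const]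
      simp [Nat.card_Icc]
      ring
    rw [h2] at h1
    rw [hlam1] at h1
    calc ∑ t ∈ Finset.Icc 1 T, max (lam t * g t * α) 0
        ≤ 2 * (1 - lam (T+1)) + 4 * α * T := h1
      _ ≤ 2 + 4 * s := by rw [mul_assoc, hαT]; nlinarith
  -- sum of A
  have hS : (∑ t ∈ Finset.Icc 1 T, lam t * g t) * α ≤ 5 := by
    have h1 : ∑ t ∈ Finset.Icc 1 T, lam t * g t * α
        ≤ ∑ t ∈ Finset.Icc 1 T,
          ((lam t - lam (t+1)) + α ^ 2 + (α / 2) * max (lam t * g t * α) 0) :=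
      Finset.sum_le_sum (fun t ht => (hstep t ht).1)
    have h2 : ∑ t ∈ Finset.Icc 1 T,
          ((lam t - lam (t+1)) + α ^ 2 + (α / 2) * max (lam t * g t * α) 0)
        = (lam 1 - lam (T+1)) + α ^ 2 * T
          + (α / 2) * ∑ t ∈ Finset.Icc 1 T, max (lam t * g t * α) 0 := by
      rw [Finset.sum_add_distrib, Finset.sum_add_distrib, htel, ← Finset.mul_sum,
        Finset.sum_const]
      simp [Nat.card_Icc]
      ring
    rw [Finset.sum_mul]
    calc (∑ t ∈ Finset.Icc 1 T, lam t * g t * α)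
        ≤ (lam 1 - lam (T+1)) + α ^ 2 * T
          + (α / 2) * ∑ t ∈ Finset.Icc 1 T, max (lam t * g t * α) 0 := by
          rw [← h2]; exact h1
      _ ≤ (lam 1 - lam (T+1)) + α ^ 2 * T + (α / 2) * (2 + 4 * s) := by
          have hMsum_nonneg : (0:ℝ) ≤ α / 2 := by positivity
          nlinarith [hM]
      _ ≤ 5 := by
          rw [hlam1, hα2T]
          have : α * s = 1 := hαs
          nlinarith
  -- conclude
  have : ∑ t ∈ Finset.Icc 1 T, lam t * g t ≤ 5 * s := by
    have h := hS
    rw [hα_def] at h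
    rw [mul_one_div] at h
    rw [div_le_iff₀ hs0] at h
    linarith
  calc ∑ t ∈ Finset.Icc 1 T, lam t * g t ≤ 5 * s := this
    _ ≤ 4 * s + 2 * s := by linarith
end

section
/- Consider the competing bid distribution with P(d=0) = P(d=1) = 1/2, a single round (T=1) with value v = 1/2 and target ROI ratio ρ = 1, ties broken in favor of the bidder. Every deterministic bid b ∈ [0,1] satisfying the ROI constraint b·F(b) ≤ v·F(b) yields expected reward at most 1/4, while the randomized strategy bidding 0 with probability 2/3 and 1 with probability 1/3 satisfies the ROI constraint in expectation and yields expected reward 1/3 > 1/4. -/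
open Set

theorem randomized_beats_deterministic :
    ∀ F : ℝ → ℝ, (∀ b ∈ Ico (0:ℝ) 1, F b = 1 / 2) → F 1 = 1 →
    (∀ b ∈ Icc (0:ℝ) 1, b * F b ≤ (1 / 2) * F b → (1 / 2) * F b ≤ 1 / 4) ∧
    ((2 / 3) * (0 * F 0) + (1 / 3) * (1 * F 1)
      ≤ (2 / 3) * ((1 / 2) * F 0) + (1 / 3) * ((1 / 2) * F 1)) ∧
    ((2 / 3) * ((1 / 2) * F 0) + (1 / 3) * ((1 / 2) * F 1) = 1 / 3) ∧
    ((1 / 4 : ℝ) < 1 / 3) := by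
  intro F hF h1
  have h0 : F 0 = 1 / 2 := hF 0 ⟨le_refl _, by norm_num⟩
  refine ⟨?_, by rw [h0, h1]; norm_num, by rw [h0, h1]; norm_num, by norm_num⟩
  intro b hb hroi
  rcases lt_or_eq_of_le hb.2 with hlt | heq
  · rw [hF b ⟨hb.1, hlt⟩]; norm_num
  · rw [heq, h1] at hroi ⊢; linarith
end
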